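/- Let f : ℝ^d → ℝ be convex with ‖∇f(x)‖₁ ≤ B for all x. Run the SGD-BGO recursion x_{k+1} = x_k − γ_k g_k with an oracle of type (O2), step sizes γ_k > 0, perturbation constants η_k > 0 and batch sizes m_k > 0, and suppose ‖x_k − x_{k₀}‖ ≤ D for all k (D bounds the iterate distances). Then for any indices 1 < k₀ < k₁ ≤ N, Σ_{k=k₀}^{k₁} 2 γ_k E[f(x_k) − f(x_{k₀})] ≤ Σ_{k=k₀}^{k₁} ( 2√d γ_k D E_k + γ_k² B_k² ), where E_k = c₁ η_k + c₃/(η_k √m_k) and B_k² = B² + 2√d B E_k + d E_k² + c₂ η_k² + c̃₂. -/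

import Mathlib

open MeasureTheory Real
open scoped BigOperators

noncomputable section

section AuxLemmas

lemma grad_ineq {d : ℕ} (f : EuclideanSpace ℝ (Fin d) → ℝ) (hf : Differentiable ℝ f)
    (hconv : ConvexOn ℝ Set.univ f) (a b : EuclideanSpace ℝ (Fin d)) :
    f a + inner ℝ (gradient f a) (b - a) ≤ f b := by
  have key : (inner ℝ (gradient f a) (b - a) : ℝ) = fderiv ℝ f a (b - a) := by
    simp [gradient, InnerProductSpace.toDual_apply_apply]
  set φ : ℝ → ℝ := fun t => f (a + t • (b - a)) with hφ
  have hφconv : ConvexOn ℝ Set.univ φ := by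
    have h1 := hconv.comp_affineMap (AffineMap.lineMap a b : ℝ →ᵃ[ℝ] EuclideanSpace ℝ (Fin d))
    have h2 : (f ∘ ⇑(AffineMap.lineMap a b)) = φ := by
      funext t
      simp [Function.comp, AffineMap.lineMap_apply, hφ, add_comm]
    rw [h2] at h1
    simpa using h1
  have hline : HasDerivAt (fun t : ℝ => a + t • (b - a)) (b - a) 0 := by
    simpa using ((hasDerivAt_id (0:ℝ)).smul_const (b - a)).const_add a
  have hder : HasDerivAt φ (fderiv ℝ f a (b - a)) 0 := by
    have := ((hf (a + (0:ℝ) • (b - a))).hasFDerivAt).comp_hasDerivAt 0 hline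
    simpa [hφ, Function.comp_def] using this
  have hs := hφconv.le_slope_of_hasDerivAt (Set.mem_univ (0:ℝ)) (Set.mem_univ (1:ℝ)) zero_lt_one hder
  rw [slope_def_field] at hs
  have h0 : φ 0 = f a := by simp [hφ]
  have h1 : φ 1 = f b := by simp [hφ]
  rw [h0, h1, sub_zero, div_one] at hs
  rw [key]
  linarith

lemma norm_le_sqrt_mul {d : ℕ} (v : EuclideanSpace ℝ (Fin d)) (c : ℝ) (hc : 0 ≤ c)
    (h : ∀ i, |v i| ≤ c) : ‖v‖ ≤ Real.sqrt d * c := by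
  rw [EuclideanSpace.norm_eq]
  have : ∑ i, ‖v i‖ ^ 2 ≤ (d : ℝ) * c ^ 2 := by
    calc ∑ i, ‖v i‖ ^ 2 ≤ ∑ _i : Fin d, c ^ 2 := by
          refine Finset.sum_le_sum fun i _ => ?_
          have := h i
          rw [Real.norm_eq_abs]
          nlinarith [abs_nonneg (v i)]
      _ = (d : ℝ) * c ^ 2 := by simp [mul_comm]
  calc Real.sqrt (∑ i, ‖v i‖ ^ 2) ≤ Real.sqrt ((d : ℝ) * c ^ 2) := Real.sqrt_le_sqrt this
    _ = Real.sqrt d * c := by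
        rw [Real.sqrt_mul (Nat.cast_nonneg d), Real.sqrt_sq hc]

lemma norm_le_sum_abs {d : ℕ} (v : EuclideanSpace ℝ (Fin d)) : ‖v‖ ≤ ∑ i, |v i| := by
  rw [EuclideanSpace.norm_eq]
  have h1 : ∑ i, ‖v i‖ ^ 2 ≤ (∑ i, |v i|) ^ 2 := by
    have := Finset.sum_sq_le_sq_sum_of_nonneg (s := Finset.univ)
      (f := fun i => |v i|) (fun i _ => abs_nonneg (v i))
    simpa [Real.norm_eq_abs] using this
  calc Real.sqrt (∑ i, ‖v i‖ ^ 2) ≤ Real.sqrt ((∑ i, |v i|) ^ 2) := Real.sqrt_le_sqrt h1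
    _ = ∑ i, |v i| := Real.sqrt_sq (Finset.sum_nonneg fun i _ => abs_nonneg _)

lemma condexp_euclidean_apply {d : ℕ} {Ω : Type*} (m' : MeasurableSpace Ω)
    {mΩ : MeasurableSpace Ω} (hm : m' ≤ mΩ) (μ : Measure Ω) [IsFiniteMeasure μ]
    (g : Ω → EuclideanSpace ℝ (Fin d)) (hg : Integrable g μ) (i : Fin d) :
    (fun ω => (μ[g|m']) ω i) =ᵐ[μ] μ[fun ω => g ω i|m'] := by
  have hSF : SigmaFinite (μ.trim hm) := by infer_instance
  set L : EuclideanSpace ℝ (Fin d) →L[ℝ] ℝ := EuclideanSpace.proj i with hL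
  have hcomp : ∀ (u : Ω → EuclideanSpace ℝ (Fin d)), (fun ω => u ω i) = fun ω => L (u ω) := by
    intro u; funext ω; simp [hL]
  rw [hcomp, hcomp]
  refine ae_eq_condExp_of_forall_setIntegral_eq hm (L.integrable_comp hg)
    (fun s _ _ => (L.integrable_comp integrable_condExp).integrableOn)
    (fun s hs hμs => ?_) ?_
  · rw [L.integral_comp_comm integrable_condExp.integrableOn,
      setIntegral_condExp hm hg hs, L.integral_comp_comm hg.integrableOn]
  · exact StronglyMeasurable.aestronglyMeasurable
      (L.continuous.comp_stronglyMeasurable stronglyMeasurable_condExp)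

lemma integral_inner_condexp {d : ℕ} {Ω : Type*} (m' : MeasurableSpace Ω)
    {mΩ : MeasurableSpace Ω} (hm : m' ≤ mΩ) (μ : Measure Ω) [IsFiniteMeasure μ]
    (g z : Ω → EuclideanSpace ℝ (Fin d)) (hg : Integrable g μ)
    (hz : StronglyMeasurable[m'] z) (C : ℝ) (hzC : ∀ᵐ ω ∂μ, ‖z ω‖ ≤ C) :
    ∫ ω, (inner ℝ (g ω) (z ω) : ℝ) ∂μ = ∫ ω, (inner ℝ ((μ[g|m']) ω) (z ω) : ℝ) ∂μ := by
  have hzm : AEStronglyMeasurable z μ := (hz.mono hm).aestronglyMeasurable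
  -- component functions are integrable after multiplying by bounded z i
  have habs : ∀ ω, ∀ i : Fin d, |z ω i| ≤ ‖z ω‖ := by
    intro ω i
    have := EuclideanSpace.norm_eq (𝕜 := ℝ) (z ω)
    have h1 : |z ω i| ^ 2 ≤ ∑ j, ‖z ω j‖ ^ 2 := by
      have : ‖z ω i‖ ^ 2 ≤ ∑ j, ‖z ω j‖ ^ 2 :=
        Finset.single_le_sum (f := fun j => ‖z ω j‖ ^ 2) (fun j _ => sq_nonneg _)
          (Finset.mem_univ i)
      simpa [Real.norm_eq_abs] using this
    have h2 : |z ω i| ≤ Real.sqrt (∑ j, ‖z ω j‖ ^ 2) := by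
      rw [show |z ω i| = Real.sqrt (|z ω i| ^ 2) by rw [Real.sqrt_sq (abs_nonneg _)]]
      exact Real.sqrt_le_sqrt h1
    rw [this]; exact h2
  have hmul : ∀ (u : Ω → EuclideanSpace ℝ (Fin d)),
      Integrable u μ → ∀ i : Fin d, Integrable (fun ω => z ω i * u ω i) μ := by
    intro u hu i
    refine Integrable.bdd_mul (c := C) ((EuclideanSpace.proj i : _ →L[ℝ] ℝ).integrable_comp hu)
      ((EuclideanSpace.proj i :
        EuclideanSpace ℝ (Fin d) →L[ℝ] ℝ).continuous.comp_aestronglyMeasurable hzm) ?_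
    filter_upwards [hzC] with ω hω
    simpa [Real.norm_eq_abs] using (habs ω i).trans hω
  have hinner_eq : ∀ (u : Ω → EuclideanSpace ℝ (Fin d)),
      (fun ω => (inner ℝ (u ω) (z ω) : ℝ)) = fun ω => ∑ i, z ω i * u ω i := by
    intro u; funext ω
    rw [real_inner_comm]
    simp [PiLp.inner_apply, RCLike.inner_apply, mul_comm]
  rw [hinner_eq, hinner_eq]
  rw [integral_finset_sum _ (fun i _ => hmul g hg i),
    integral_finset_sum _ (fun i _ => hmul _ integrable_condExp i)]
  refine Finset.sum_congr rfl fun i _ => ?_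
  -- tower property for the scalar component
  have hzi : StronglyMeasurable[m'] (fun ω => z ω i) :=
    (EuclideanSpace.proj i :
      EuclideanSpace ℝ (Fin d) →L[ℝ] ℝ).continuous.comp_stronglyMeasurable hz
  have hgi : Integrable (fun ω => g ω i) μ :=
    (EuclideanSpace.proj i : EuclideanSpace ℝ (Fin d) →L[ℝ] ℝ).integrable_comp hg
  have hpull := condExp_mul_of_stronglyMeasurable_left (μ := μ) (m := m') hzi (hmul g hg i) hgi
  calc ∫ ω, z ω i * g ω i ∂μ
      = ∫ ω, (μ[(fun ω => z ω i) * (fun ω => g ω i)|m']) ω ∂μ := by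
        rw [integral_condExp hm]; rfl
    _ = ∫ ω, z ω i * (μ[fun ω => g ω i|m']) ω ∂μ := by
        refine integral_congr_ae ?_
        filter_upwards [hpull] with ω hω
        simpa using hω
    _ = ∫ ω, z ω i * (μ[g|m']) ω i ∂μ := by
        refine integral_congr_ae ?_
        filter_upwards [condexp_euclidean_apply m' hm μ g hg i] with ω hω
        rw [hω]

end AuxLemmas

/-- **SGD-BGO under oracle (O2): key inequality over a window of iterations**
(Lemma 1 in the paper). For indices `1 < k₀ < k₁ ≤ N`, assuming the distances
`‖x_k - x_{k₀}‖` are bounded by `D`, the weighted sum of expected suboptimality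
gaps relative to `x_{k₀}` is bounded. -/
theorem sgd_bgo_O2_window_lemma
    {d : ℕ} {Ω : Type*} {mΩ : MeasurableSpace Ω}
    (μ : Measure Ω) [IsProbabilityMeasure μ]
    (ℱ : Filtration ℕ mΩ)
    (f : EuclideanSpace ℝ (Fin d) → ℝ)
    (hf : Differentiable ℝ f)
    (hconv : ConvexOn ℝ Set.univ f)
    (B c₁ c₂ c₂' c₃ : ℝ)
    (hB : 0 < B)
    (hc₁ : 0 < c₁) (hc₂ : 0 < c₂) (hc₂' : 0 < c₂') (hc₃ : 0 < c₃)
    -- (A2): `‖∇f(x)‖₁ ≤ B`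
    (hgradB : ∀ x, ∑ i, |gradient f x i| ≤ B)
    (N : ℕ)
    -- algorithm parameters: positive step sizes, perturbation constants and
    -- batch sizes
    (γ η m : ℕ → ℝ)
    (hγpos : ∀ k, 1 ≤ k → 0 < γ k)
    (hηpos : ∀ k, 1 ≤ k → 0 < η k)
    (hmpos : ∀ k, 1 ≤ k → 0 < m k)
    -- iterates and oracle outputs
    (x g : ℕ → Ω → EuclideanSpace ℝ (Fin d))
    (hx_adapted : ∀ k, StronglyMeasurable[ℱ k] (x k))
    (hg_int : ∀ k, Integrable (g k) μ)
    (hrec : ∀ k, 1 ≤ k → k ≤ N → ∀ ω, x (k + 1) ω = x k ω - γ k • g k ω)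
    -- oracle (O2), condition (a): bias bound in the sup-norm
    (hbias : ∀ k, 1 ≤ k → k ≤ N →
      ∀ᵐ ω ∂μ, ∀ i, |(μ[g k|ℱ k]) ω i - gradient f (x k ω) i|
        ≤ c₁ * η k + c₃ / (η k * Real.sqrt (m k)))
    -- oracle (O2), condition (b): conditional variance bound
    (hvar : ∀ k, 1 ≤ k → k ≤ N →
      ∀ᵐ ω ∂μ,
        (μ[fun ω' => ‖g k ω' - (μ[g k|ℱ k]) ω'‖ ^ 2|ℱ k]) ω ≤ c₂ * η k ^ 2 + c₂')
    -- indices of the window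
    (k₀ k₁ : ℕ) (hk₀ : 1 < k₀) (hk₀k₁ : k₀ < k₁) (hk₁ : k₁ ≤ N)
    -- `D` bounds the distances of the iterates to `x_{k₀}`
    (D : ℝ)
    (hD : ∀ k, ∀ ω, ‖x k ω - x k₀ ω‖ ≤ D)
    (E B2 : ℕ → ℝ)
    (hE : ∀ k, E k = c₁ * η k + c₃ / (η k * Real.sqrt (m k)))
    (hB2 : ∀ k, B2 k = B ^ 2 + 2 * Real.sqrt d * B * E k + d * E k ^ 2
        + c₂ * η k ^ 2 + c₂') :
    ∑ k ∈ Finset.Icc k₀ k₁,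
        2 * γ k * ∫ ω, (f (x k ω) - f (x k₀ ω)) ∂μ
      ≤ ∑ k ∈ Finset.Icc k₀ k₁,
          (2 * Real.sqrt d * γ k * D * E k + γ k ^ 2 * B2 k) := by
  classical
  have hΩ : Nonempty Ω := by
    by_contra hne
    have : μ Set.univ = 0 := by
      rw [Set.univ_eq_empty_iff.mpr (not_nonempty_iff.mp hne)]; simp
    simp [measure_univ] at this
  have hD0 : 0 ≤ D := le_trans (norm_nonneg _) (hD k₀ (Classical.arbitrary Ω))
  -- expected squared distances to x_{k₀}
  set a : ℕ → ℝ := fun k => ∫ ω, ‖x k ω - x k₀ ω‖ ^ 2 ∂μ with ha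
  have ha_nonneg : ∀ k, 0 ≤ a k := fun k => integral_nonneg fun ω => sq_nonneg _
  have ha0 : a k₀ = 0 := by simp [ha]
  -- the key one-step inequality
  have key : ∀ k, k₀ ≤ k → k ≤ k₁ →
      2 * γ k * ∫ ω, (f (x k ω) - f (x k₀ ω)) ∂μ
        ≤ a k - a (k + 1) + (2 * Real.sqrt d * γ k * D * E k + γ k ^ 2 * B2 k) := by
    intro k hk0 hk1
    have h1k : 1 ≤ k := le_trans hk₀.le hk0
    have hkN : k ≤ N := hk1.trans hk₁
    have hγ0 : 0 ≤ γ k := (hγpos k h1k).le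
    have hE0 : 0 ≤ E k := by
      rw [hE k]
      have h1 : 0 < η k := hηpos k h1k
      have h2 : 0 < Real.sqrt (m k) := Real.sqrt_pos.mpr (hmpos k h1k)
      positivity
    have hsd0 : (0:ℝ) ≤ Real.sqrt d := Real.sqrt_nonneg _
    set y : Ω → EuclideanSpace ℝ (Fin d) := fun ω => x k ω - x k₀ ω with hy
    set h : Ω → EuclideanSpace ℝ (Fin d) := μ[g k|ℱ k] with hh
    -- measurability facts
    have hySM : StronglyMeasurable[ℱ k] y :=
      (hx_adapted k).sub ((hx_adapted k₀).mono (ℱ.mono hk0))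
    have hyAE : AEStronglyMeasurable y μ := (hySM.mono (ℱ.le k)).aestronglyMeasurable
    have hgAE : AEStronglyMeasurable (g k) μ := (hg_int k).1
    have hhSM : StronglyMeasurable[ℱ k] h := stronglyMeasurable_condExp
    have hhAE : AEStronglyMeasurable h μ := (hhSM.mono (ℱ.le k)).aestronglyMeasurable
    have hyD : ∀ ω, ‖y ω‖ ≤ D := fun ω => hD k ω
    -- bound on the conditional mean
    have hbnd : ∀ᵐ ω ∂μ, ‖h ω - gradient f (x k ω)‖ ≤ Real.sqrt d * E k := by
      filter_upwards [hbias k h1k hkN] with ω hω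
      refine norm_le_sqrt_mul _ _ hE0 fun i => ?_
      have := hω i
      rw [hE k]
      simpa using this
    have hgradnorm : ∀ v, ‖gradient f v‖ ≤ B := fun v => (norm_le_sum_abs _).trans (hgradB v)
    have hbnd2 : ∀ᵐ ω ∂μ, ‖h ω‖ ≤ B + Real.sqrt d * E k := by
      filter_upwards [hbnd] with ω hω
      calc ‖h ω‖ = ‖gradient f (x k ω) + (h ω - gradient f (x k ω))‖ := by
            congr 1
            abel
        _ ≤ ‖gradient f (x k ω)‖ + ‖h ω - gradient f (x k ω)‖ := norm_add_le _ _
        _ ≤ B + Real.sqrt d * E k := add_le_add (hgradnorm _) hω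
    -- integrability facts
    have int_y2 : Integrable (fun ω => ‖y ω‖ ^ 2) μ := by
      refine Integrable.mono' (integrable_const (D ^ 2)) ?_ ?_
      · exact (hyAE.norm.pow 2).congr (Filter.Eventually.of_forall fun ω => by simp)
      · filter_upwards with ω
        rw [Real.norm_eq_abs, abs_of_nonneg (sq_nonneg _)]
        exact pow_le_pow_left₀ (norm_nonneg _) (hyD ω) 2
    have hx1AE : AEStronglyMeasurable (fun ω => x (k+1) ω - x k₀ ω) μ :=
      ((((hx_adapted (k+1))).sub ((hx_adapted k₀).mono (ℱ.mono (by omega)))).mono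
        (ℱ.le (k+1))).aestronglyMeasurable
    have int_x12 : Integrable (fun ω => ‖x (k+1) ω - x k₀ ω‖ ^ 2) μ := by
      refine Integrable.mono' (integrable_const (D ^ 2)) ?_ ?_
      · exact (hx1AE.norm.pow 2).congr (Filter.Eventually.of_forall fun ω => by simp)
      · filter_upwards with ω
        rw [Real.norm_eq_abs, abs_of_nonneg (sq_nonneg _)]
        exact pow_le_pow_left₀ (norm_nonneg _) (hD (k+1) ω) 2
    have int_gy : Integrable (fun ω => (inner ℝ (g k ω) (y ω) : ℝ)) μ := by
      refine Integrable.mono' ((hg_int k).norm.mul_const D) (hgAE.inner hyAE) ?_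
      filter_upwards with ω
      rw [Real.norm_eq_abs]
      exact (abs_real_inner_le_norm _ _).trans
        (mul_le_mul_of_nonneg_left (hyD ω) (norm_nonneg _))
    -- pointwise expansion of the recursion
    have hpt : ∀ ω, ‖x (k+1) ω - x k₀ ω‖ ^ 2
        = ‖y ω‖ ^ 2 - 2 * γ k * (inner ℝ (g k ω) (y ω) : ℝ) + γ k ^ 2 * ‖g k ω‖ ^ 2 := by
      intro ω
      rw [hrec k h1k hkN ω]
      have e1 : x k ω - γ k • g k ω - x k₀ ω = y ω - γ k • g k ω := by
        rw [hy, sub_right_comm]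
      rw [e1, norm_sub_sq_real, real_inner_smul_right, norm_smul, real_inner_comm]
      simp [Real.norm_eq_abs, mul_pow, sq_abs]
      ring
    have int_g2 : Integrable (fun ω => ‖g k ω‖ ^ 2) μ := by
      have hne : γ k ^ 2 ≠ 0 := pow_ne_zero _ (hγpos k h1k).ne'
      have : Integrable (fun ω => γ k ^ 2 * ‖g k ω‖ ^ 2) μ := by
        have := ((int_x12.sub int_y2).add ((int_gy.const_mul (2 * γ k))))
        refine this.congr ?_
        filter_upwards with ω
        have := hpt ω
        simp only [Pi.add_apply, Pi.sub_apply]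
        linarith
      have h2 := this.const_mul (γ k ^ 2)⁻¹
      refine h2.congr ?_
      filter_upwards with ω
      exact inv_mul_cancel_left₀ hne _
    have int_h : Integrable h μ := integrable_condExp
    have int_h2 : Integrable (fun ω => ‖h ω‖ ^ 2) μ := by
      refine Integrable.mono' (integrable_const ((B + Real.sqrt d * E k) ^ 2)) ?_ ?_
      · exact (hhAE.norm.pow 2).congr (Filter.Eventually.of_forall fun ω => by simp)
      · filter_upwards [hbnd2] with ω hω
        rw [Real.norm_eq_abs, abs_of_nonneg (sq_nonneg _)]
        exact pow_le_pow_left₀ (norm_nonneg _) hω 2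
    have int_gh : Integrable (fun ω => (inner ℝ (g k ω) (h ω) : ℝ)) μ := by
      refine Integrable.mono' ((hg_int k).norm.mul_const (B + Real.sqrt d * E k))
        (hgAE.inner hhAE) ?_
      filter_upwards [hbnd2] with ω hω
      rw [Real.norm_eq_abs]
      exact (abs_real_inner_le_norm _ _).trans
        (mul_le_mul_of_nonneg_left hω (norm_nonneg _))
    have int_gmh2 : Integrable (fun ω => ‖g k ω - h ω‖ ^ 2) μ := by
      have : Integrable (fun ω => ‖g k ω‖ ^ 2 - 2 * (inner ℝ (g k ω) (h ω) : ℝ)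
          + ‖h ω‖ ^ 2) μ := (int_g2.sub (int_gh.const_mul 2)).add int_h2
      refine this.congr ?_
      filter_upwards with ω
      rw [norm_sub_sq_real]
    have int_hy : Integrable (fun ω => (inner ℝ (h ω) (y ω) : ℝ)) μ := by
      refine Integrable.mono' (int_h.norm.mul_const D) (hhAE.inner hyAE) ?_
      filter_upwards with ω
      rw [Real.norm_eq_abs]
      exact (abs_real_inner_le_norm _ _).trans
        (mul_le_mul_of_nonneg_left (hyD ω) (norm_nonneg _))
    -- tower properties
    have eq1 : ∫ ω, (inner ℝ (g k ω) (y ω) : ℝ) ∂μ = ∫ ω, (inner ℝ (h ω) (y ω) : ℝ) ∂μ :=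
      integral_inner_condexp (ℱ k) (ℱ.le k) μ (g k) y (hg_int k) hySM D
        (Filter.Eventually.of_forall hyD)
    have eq2 : ∫ ω, (inner ℝ (g k ω) (h ω) : ℝ) ∂μ = ∫ ω, (inner ℝ (h ω) (h ω) : ℝ) ∂μ :=
      integral_inner_condexp (ℱ k) (ℱ.le k) μ (g k) h (hg_int k) hhSM
        (B + Real.sqrt d * E k) hbnd2
    -- variance bound
    have var_le : ∫ ω, ‖g k ω - h ω‖ ^ 2 ∂μ ≤ c₂ * η k ^ 2 + c₂' := by
      have hceq := integral_condExp (μ := μ) (ℱ.le k)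
        (f := fun ω => ‖g k ω - h ω‖ ^ 2)
      rw [← hceq]
      have hmono := integral_mono_ae (integrable_condExp (f := fun ω => ‖g k ω - h ω‖ ^ 2))
        (integrable_const (c₂ * η k ^ 2 + c₂')) (hvar k h1k hkN)
      simpa [measure_univ] using hmono
    -- second moment bound on h
    have h2_le : ∫ ω, ‖h ω‖ ^ 2 ∂μ ≤ (B + Real.sqrt d * E k) ^ 2 := by
      have hmono := integral_mono_ae int_h2
        (integrable_const ((B + Real.sqrt d * E k) ^ 2)) ?_
      · simpa [measure_univ] using hmono
      · filter_upwards [hbnd2] with ω hω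
        exact pow_le_pow_left₀ (norm_nonneg _) hω 2
    -- second moment bound on g
    have g2_le : ∫ ω, ‖g k ω‖ ^ 2 ∂μ ≤ B2 k := by
      have hsplit : ∫ ω, ‖g k ω‖ ^ 2 ∂μ
          = ∫ ω, ‖g k ω - h ω‖ ^ 2 ∂μ + 2 * ∫ ω, (inner ℝ (g k ω) (h ω) : ℝ) ∂μ
            - ∫ ω, ‖h ω‖ ^ 2 ∂μ := by
        have e : ∀ ω, ‖g k ω‖ ^ 2 = ‖g k ω - h ω‖ ^ 2 + 2 * (inner ℝ (g k ω) (h ω) : ℝ)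
            - ‖h ω‖ ^ 2 := by
          intro ω
          rw [norm_sub_sq_real]; ring
        calc ∫ ω, ‖g k ω‖ ^ 2 ∂μ
            = ∫ ω, (‖g k ω - h ω‖ ^ 2 + 2 * (inner ℝ (g k ω) (h ω) : ℝ) - ‖h ω‖ ^ 2) ∂μ := by
              exact integral_congr_ae (Filter.Eventually.of_forall e)
          _ = ∫ ω, ‖g k ω - h ω‖ ^ 2 ∂μ + 2 * ∫ ω, (inner ℝ (g k ω) (h ω) : ℝ) ∂μ
              - ∫ ω, ‖h ω‖ ^ 2 ∂μ := by
              have intC : Integrable (fun ω => ‖g k ω - h ω‖ ^ 2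
                  + 2 * (inner ℝ (g k ω) (h ω) : ℝ)) μ := int_gmh2.add (int_gh.const_mul 2)
              rw [integral_sub intC int_h2, integral_add int_gmh2 (int_gh.const_mul 2),
                integral_const_mul]
      have hinner_self : ∫ ω, (inner ℝ (h ω) (h ω) : ℝ) ∂μ = ∫ ω, ‖h ω‖ ^ 2 ∂μ := by
        refine integral_congr_ae (Filter.Eventually.of_forall fun ω => ?_)
        show (inner ℝ (h ω) (h ω) : ℝ) = ‖h ω‖ ^ 2
        rw [real_inner_self_eq_norm_sq]
      have hB2eq : B2 k = (B + Real.sqrt d * E k) ^ 2 + (c₂ * η k ^ 2 + c₂') := by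
        rw [hB2 k]
        have hd : Real.sqrt d ^ 2 = (d : ℝ) := Real.sq_sqrt (Nat.cast_nonneg d)
        linear_combination (-(E k ^ 2)) * hd
      rw [hsplit, eq2, hinner_self, hB2eq]
      linarith
    -- lower bound for the inner product with the conditional mean
    have hlow : ∫ ω, (f (x k ω) - f (x k₀ ω)) ∂μ - Real.sqrt d * E k * D
        ≤ ∫ ω, (inner ℝ (h ω) (y ω) : ℝ) ∂μ := by
      have int_f : Integrable (fun ω => f (x k ω) - f (x k₀ ω)) μ := by
        have hfb : ∀ a b : EuclideanSpace ℝ (Fin d), |f a - f b| ≤ B * ‖a - b‖ := by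
          intro a b
          rw [abs_le]
          constructor
          · have h1 := grad_ineq f hf hconv b a
            have h2 := (abs_le.mp (abs_real_inner_le_norm (gradient f b) (a - b))).1
            have h3 : ‖gradient f b‖ * ‖a - b‖ ≤ B * ‖a - b‖ :=
              mul_le_mul_of_nonneg_right (hgradnorm b) (norm_nonneg _)
            linarith
          · have h1 := grad_ineq f hf hconv a b
            have h2 := (abs_le.mp (abs_real_inner_le_norm (gradient f a) (b - a))).1
            have h3 : ‖gradient f a‖ * ‖b - a‖ ≤ B * ‖b - a‖ :=
              mul_le_mul_of_nonneg_right (hgradnorm a) (norm_nonneg _)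
            rw [norm_sub_rev] at h2 h3
            linarith
        refine Integrable.mono' (integrable_const (B * D)) ?_ ?_
        · exact ((hf.continuous.comp_aestronglyMeasurable
            ((hx_adapted k).mono (ℱ.le k)).aestronglyMeasurable)).sub
            ((hf.continuous.comp_aestronglyMeasurable
            ((hx_adapted k₀).mono (ℱ.le k₀)).aestronglyMeasurable))
        · filter_upwards with ω
          rw [Real.norm_eq_abs]
          exact (hfb _ _).trans (mul_le_mul_of_nonneg_left (hyD ω) hB.le)
      have hub : ∀ᵐ ω ∂μ, f (x k ω) - f (x k₀ ω) - Real.sqrt d * E k * D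
          ≤ (inner ℝ (h ω) (y ω) : ℝ) := by
        filter_upwards [hbnd] with ω hω
        have hg1 : f (x k ω) - f (x k₀ ω) ≤ (inner ℝ (gradient f (x k ω)) (y ω) : ℝ) := by
          have := grad_ineq f hf hconv (x k ω) (x k₀ ω)
          have e : (inner ℝ (gradient f (x k ω)) (x k₀ ω - x k ω) : ℝ)
              = -(inner ℝ (gradient f (x k ω)) (y ω) : ℝ) := by
            rw [hy]
            rw [show x k₀ ω - x k ω = -(x k ω - x k₀ ω) by abel, inner_neg_right]
          rw [e] at this
          linarith
        have hg2 : -(Real.sqrt d * E k * D) ≤ (inner ℝ (h ω - gradient f (x k ω)) (y ω) : ℝ) := by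
          have h1 : |(inner ℝ (h ω - gradient f (x k ω)) (y ω) : ℝ)|
              ≤ ‖h ω - gradient f (x k ω)‖ * ‖y ω‖ := abs_real_inner_le_norm _ _
          have h2 : ‖h ω - gradient f (x k ω)‖ * ‖y ω‖ ≤ Real.sqrt d * E k * D :=
            mul_le_mul hω (hyD ω) (norm_nonneg _) (by positivity)
          have := abs_le.mp (h1.trans h2)
          exact this.1
        have e : (inner ℝ (h ω) (y ω) : ℝ)
            = (inner ℝ (gradient f (x k ω)) (y ω) : ℝ)
              + (inner ℝ (h ω - gradient f (x k ω)) (y ω) : ℝ) := by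
          rw [← inner_add_left]
          congr 1
          abel
        rw [e]
        linarith
      have int_sub : Integrable (fun ω => f (x k ω) - f (x k₀ ω)
          - Real.sqrt d * E k * D) μ := int_f.sub (integrable_const _)
      have hmono := integral_mono_ae int_sub int_hy hub
      rw [integral_sub int_f (integrable_const _)] at hmono
      simpa [measure_univ] using hmono
    -- integrate the pointwise expansion
    have hint_eq : a (k+1) = a k - 2 * γ k * ∫ ω, (inner ℝ (g k ω) (y ω) : ℝ) ∂μ
        + γ k ^ 2 * ∫ ω, ‖g k ω‖ ^ 2 ∂μ := by
      have : a (k+1) = ∫ ω, (‖y ω‖ ^ 2 - 2 * γ k * (inner ℝ (g k ω) (y ω) : ℝ)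
          + γ k ^ 2 * ‖g k ω‖ ^ 2) ∂μ := by
        rw [ha]
        exact integral_congr_ae (Filter.Eventually.of_forall hpt)
      have intA : Integrable (fun ω => ‖y ω‖ ^ 2
          - 2 * γ k * (inner ℝ (g k ω) (y ω) : ℝ)) μ :=
        int_y2.sub (int_gy.const_mul (2 * γ k))
      have intB : Integrable (fun ω => γ k ^ 2 * ‖g k ω‖ ^ 2) μ :=
        int_g2.const_mul (γ k ^ 2)
      rw [this, integral_add intA intB, integral_sub int_y2 (int_gy.const_mul (2 * γ k)),
        integral_const_mul, integral_const_mul]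
    -- put everything together
    have m1 : 2 * γ k * (∫ ω, (f (x k ω) - f (x k₀ ω)) ∂μ - Real.sqrt d * E k * D)
        ≤ 2 * γ k * ∫ ω, (inner ℝ (h ω) (y ω) : ℝ) ∂μ :=
      mul_le_mul_of_nonneg_left hlow (by linarith)
    have m2 : γ k ^ 2 * ∫ ω, ‖g k ω‖ ^ 2 ∂μ ≤ γ k ^ 2 * B2 k :=
      mul_le_mul_of_nonneg_left g2_le (sq_nonneg _)
    rw [mul_sub] at m1
    rw [eq1] at hint_eq
    linarith [m1, m2, hint_eq]
  -- telescoping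
  have tel : ∀ n, k₀ ≤ n → ∑ k ∈ Finset.Icc k₀ n, (a k - a (k + 1)) = a k₀ - a (n + 1) := by
    intro n hn
    induction n, hn using Nat.le_induction with
    | base => simp
    | succ n hn ih => rw [Finset.sum_Icc_succ_top (by omega), ih]; ring
  calc ∑ k ∈ Finset.Icc k₀ k₁, 2 * γ k * ∫ ω, (f (x k ω) - f (x k₀ ω)) ∂μ
      ≤ ∑ k ∈ Finset.Icc k₀ k₁,
          (a k - a (k + 1) + (2 * Real.sqrt d * γ k * D * E k + γ k ^ 2 * B2 k)) := by
        refine Finset.sum_le_sum fun k hk => ?_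
        rw [Finset.mem_Icc] at hk
        exact key k hk.1 hk.2
    _ = (a k₀ - a (k₁ + 1)) + ∑ k ∈ Finset.Icc k₀ k₁,
          (2 * Real.sqrt d * γ k * D * E k + γ k ^ 2 * B2 k) := by
        rw [Finset.sum_add_distrib, tel k₁ hk₀k₁.le]
    _ ≤ ∑ k ∈ Finset.Icc k₀ k₁,
          (2 * Real.sqrt d * γ k * D * E k + γ k ^ 2 * B2 k) := by
        have := ha_nonneg (k₁ + 1)
        linarith
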